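/- Let f : Y × ℝ^k → [0,∞] be a Borel map, where Y = [0,1)^d, and let {x} ∈ Y denote the fractional part of x ∈ ℝ^d (so x = [x] + {x} with [x] ∈ ℤ^d). Let Ω ⊂ ℝ^d be measurable, ε > 0, and φ : Ω → ℝ^k measurable. Define the unfolding U_ε(φ)(x,y) := φ*(ε[x/ε] + εy) for (x,y) ∈ ℝ^d × Y, where φ* is the extension of φ by zero to ℝ^d. Then ∫_Ω f({x/ε}, φ(x)) dx = ∫_{ℝ^d} ∫_Y f(y, U_ε(φ)(x,y)) dy dx, provided f(y, 0) = 0 for all y. -/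

import Mathlib

open MeasureTheory Filter Topology

/-- Componentwise fractional part `{x} ∈ Y = [0,1)^d`. -/
noncomputable def fracPart {d : ℕ} (x : Fin d → ℝ) : Fin d → ℝ :=
  fun i => Int.fract (x i)

/-- Componentwise integer part `[x] ∈ ℤ^d` (as a real vector). -/
noncomputable def intPart {d : ℕ} (x : Fin d → ℝ) : Fin d → ℝ :=
  fun i => (⌊x i⌋ : ℝ)

/-- The reference periodicity cell `Y = [0,1)^d`. -/
def Ybox (d : ℕ) : Set (Fin d → ℝ) :=
  Set.pi Set.univ fun _ => Set.Ico (0:ℝ) 1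

/-- The periodic unfolding `U_ε(φ)(x,y) = φ*(ε[x/ε] + εy)` of a map `φ : Ω → ℝ^k`,
where `φ*` is the extension of `φ` by zero to `ℝ^d`. -/
noncomputable def unfoldOp {d k : ℕ} (ε : ℝ) (Ω : Set (Fin d → ℝ))
    (φ : (Fin d → ℝ) → (Fin k → ℝ)) :
    (Fin d → ℝ) → (Fin d → ℝ) → (Fin k → ℝ) :=
  fun x y => Set.indicator Ω φ (ε • intPart (ε⁻¹ • x) + ε • y)

/-- Change of variables `x = c + ε • y` in a lower Lebesgue integral on `ℝ^d`. -/
lemma unfold_cov {d : ℕ} {ε : ℝ} (hε : 0 < ε) (c : Fin d → ℝ)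
    (F : (Fin d → ℝ) → ENNReal) :
    ∫⁻ x, F x = ENNReal.ofReal ε ^ d * ∫⁻ y, F (c + ε • y) := by
  set e : (Fin d → ℝ) ≃ᵐ (Fin d → ℝ) :=
    (MeasurableEquiv.smul₀ ε hε.ne').trans (MeasurableEquiv.addLeft c) with he
  have hcoe : ⇑e = fun y => c + ε • y := rfl
  have hmap : Measure.map e volume = (ENNReal.ofReal ε ^ d)⁻¹ • volume := by
    have h1 : Measure.map (fun y : Fin d → ℝ => ε • y) volume
        = ENNReal.ofReal |(ε ^ Module.finrank ℝ (Fin d → ℝ))⁻¹| • volume :=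
      Measure.map_addHaar_smul volume hε.ne'
    have h2 : ⇑e = (fun x : Fin d → ℝ => c + x) ∘ (fun y : Fin d → ℝ => ε • y) := rfl
    rw [hcoe] at h2 ⊢
    rw [h2, ← Measure.map_map (measurable_const_add c) (measurable_const_smul ε), h1,
      Measure.map_smul, (measurePreserving_add_left volume c).map_eq]
    congr 1
    rw [Module.finrank_fin_fun, abs_of_nonneg (by positivity),
      ENNReal.ofReal_inv_of_pos (by positivity), ENNReal.ofReal_pow hε.le]
  have key : ∫⁻ y, F (c + ε • y) = (ENNReal.ofReal ε ^ d)⁻¹ * ∫⁻ x, F x := by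
    rw [show (fun y => F (c + ε • y)) = fun y => F (e y) from rfl,
      ← MeasureTheory.lintegral_map_equiv F e, hmap, lintegral_smul_measure, smul_eq_mul]
  rw [key, ← mul_assoc, ENNReal.mul_inv_cancel (by positivity)
    (ENNReal.pow_ne_top ENNReal.ofReal_ne_top), one_mul]

/-- Set version of the change of variables. -/
lemma unfold_cov_set {d : ℕ} {ε : ℝ} (hε : 0 < ε) (c : Fin d → ℝ)
    (F : (Fin d → ℝ) → ENNReal) {s t : Set (Fin d → ℝ)}
    (hs : MeasurableSet s) (ht : MeasurableSet t)
    (hpre : ∀ y, c + ε • y ∈ s ↔ y ∈ t) :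
    ∫⁻ x in s, F x = ENNReal.ofReal ε ^ d * ∫⁻ y in t, F (c + ε • y) := by
  rw [← lintegral_indicator hs, ← lintegral_indicator ht,
    unfold_cov hε c (s.indicator F)]
  congr 1
  refine lintegral_congr fun y => ?_
  by_cases hy : y ∈ t
  · rw [Set.indicator_of_mem ((hpre y).mpr hy), Set.indicator_of_mem hy]
  · rw [Set.indicator_of_notMem (fun h => hy ((hpre y).mp h)),
      Set.indicator_of_notMem hy]

/-- The unfolding integral identity:
`∫_Ω f({x/ε}, φ(x)) dx = ∫_{ℝ^d} ∫_Y f(y, U_ε(φ)(x,y)) dy dx`, provided `f(y,0) = 0`. -/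
theorem stmt12 {d k : ℕ} (hd : 1 ≤ d) (ε : ℝ) (hε : 0 < ε)
    (Ω : Set (Fin d → ℝ)) (hΩm : MeasurableSet Ω)
    (f : (Fin d → ℝ) → (Fin k → ℝ) → ENNReal)
    (hf : Measurable (Function.uncurry f))
    (hf0 : ∀ y, f y 0 = 0)
    (φ : (Fin d → ℝ) → (Fin k → ℝ)) (hφ : Measurable φ) :
    (∫⁻ x in Ω, f (fracPart (ε⁻¹ • x)) (φ x))
      = ∫⁻ x, ∫⁻ y in Ybox d, f y (unfoldOp ε Ω φ x y) := by
  classical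
  set ψ : (Fin d → ℝ) → (Fin k → ℝ) := Set.indicator Ω φ with hψ
  set F : (Fin d → ℝ) → ENNReal := fun x => f (fracPart (ε⁻¹ • x)) (ψ x) with hF
  set H : (Fin d → ℝ) → ENNReal :=
    fun x => ∫⁻ y in Ybox d, f y (ψ (ε • intPart (ε⁻¹ • x) + ε • y)) with hH
  have hYm : MeasurableSet (Ybox d) :=
    MeasurableSet.pi Set.countable_univ fun _ _ => measurableSet_Ico
  -- the cubes
  set C : (Fin d → ℤ) → Set (Fin d → ℝ) :=
    fun ξ => Set.pi Set.univ fun i => {t : ℝ | ⌊ε⁻¹ * t⌋ = ξ i} with hC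
  have hmemC : ∀ (ξ : Fin d → ℤ) (x : Fin d → ℝ),
      x ∈ C ξ ↔ ∀ i, ⌊ε⁻¹ * x i⌋ = ξ i := by
    intro ξ x; simp [hC, Set.mem_pi]
  have hIco : ∀ n : ℤ, {t : ℝ | ⌊ε⁻¹ * t⌋ = n} = Set.Ico (ε * n) (ε * (n + 1)) := by
    intro n
    ext t
    simp only [Set.mem_setOf_eq, Set.mem_Ico, Int.floor_eq_iff]
    constructor
    · rintro ⟨h1, h2⟩
      constructor
      · calc ε * (n : ℝ) ≤ ε * (ε⁻¹ * t) := by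
              exact mul_le_mul_of_nonneg_left h1 hε.le
          _ = t := by field_simp
      · calc t = ε * (ε⁻¹ * t) := by field_simp
          _ < ε * (n + 1) := by exact mul_lt_mul_of_pos_left h2 hε
    · rintro ⟨h1, h2⟩
      constructor
      · have := mul_le_mul_of_nonneg_left h1 (inv_nonneg.mpr hε.le)
        calc (n : ℝ) = ε⁻¹ * (ε * n) := by field_simp
          _ ≤ ε⁻¹ * t := this
      · have := mul_lt_mul_of_pos_left h2 (inv_pos.mpr hε)
        calc ε⁻¹ * t < ε⁻¹ * (ε * (n + 1)) := this
          _ = n + 1 := by field_simp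
  have hCm : ∀ ξ, MeasurableSet (C ξ) := by
    intro ξ
    refine MeasurableSet.pi Set.countable_univ fun i _ => ?_
    rw [hIco]
    exact measurableSet_Ico
  have hCvol : ∀ ξ, volume (C ξ) = ENNReal.ofReal ε ^ d := by
    intro ξ
    rw [hC]
    simp only [hIco]
    rw [volume_pi_pi]
    have : ∀ i : Fin d, volume (Set.Ico (ε * (ξ i : ℝ)) (ε * ((ξ i : ℝ) + 1)))
        = ENNReal.ofReal ε := by
      intro i
      rw [Real.volume_Ico]
      congr 1
      ring
    simp [this]
  have hcover : ⋃ ξ, C ξ = Set.univ := by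
    ext x
    simp only [Set.mem_iUnion, Set.mem_univ, iff_true]
    exact ⟨fun i => ⌊ε⁻¹ * x i⌋, (hmemC _ x).mpr fun i => rfl⟩
  have hdisj : Pairwise (Function.onFun Disjoint C) := by
    intro ξ ξ' hne
    refine Set.disjoint_left.mpr fun x hx hx' => hne (funext fun i => ?_)
    rw [← (hmemC ξ x).mp hx i, ← (hmemC ξ' x).mp hx' i]
  -- the affine image of Ybox is C ξ
  have hpre : ∀ (ξ : Fin d → ℤ) (y : Fin d → ℝ),
      (ε • fun i => ((ξ i : ℝ))) + ε • y ∈ C ξ ↔ y ∈ Ybox d := by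
    intro ξ y
    rw [hmemC]
    have hcomp : ∀ i, ε⁻¹ * (((ε • fun i => ((ξ i : ℝ))) + ε • y) i)
        = (ξ i : ℝ) + y i := by
      intro i
      simp only [Pi.add_apply, Pi.smul_apply, smul_eq_mul]
      field_simp
    simp only [hcomp, Int.floor_intCast_add]
    constructor
    · intro h
      intro i _
      have := h i
      have hy0 : ⌊y i⌋ = 0 := by omega
      have := Int.floor_eq_zero_iff.mp hy0
      simpa using this
    · intro h i
      have := h i (Set.mem_univ i)
      have hy0 : ⌊y i⌋ = 0 := Int.floor_eq_zero_iff.mpr (by simpa using this)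
      omega
  -- fracPart identity on the cell
  have hfrac : ∀ (ξ : Fin d → ℤ) (y : Fin d → ℝ), y ∈ Ybox d →
      fracPart (ε⁻¹ • ((ε • fun i => ((ξ i : ℝ))) + ε • y)) = y := by
    intro ξ y hy
    funext i
    have hyi : y i ∈ Set.Ico (0:ℝ) 1 := hy i (Set.mem_univ i)
    have : (ε⁻¹ • ((ε • fun i => ((ξ i : ℝ))) + ε • y)) i = (ξ i : ℝ) + y i := by
      simp only [Pi.smul_apply, Pi.add_apply, smul_eq_mul]
      field_simp
    simp only [fracPart, this, Int.fract_intCast_add]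
    exact Int.fract_eq_self.mpr ⟨hyi.1, hyi.2⟩
  -- intPart identity on the cell
  have hint : ∀ (ξ : Fin d → ℤ) (x : Fin d → ℝ), x ∈ C ξ →
      intPart (ε⁻¹ • x) = fun i => ((ξ i : ℝ)) := by
    intro ξ x hx
    funext i
    simp only [intPart, Pi.smul_apply, smul_eq_mul]
    exact_mod_cast congrArg (fun n : ℤ => (n : ℝ)) ((hmemC ξ x).mp hx i)
  -- Step 1: extend the LHS integral to all of ℝ^d
  have h1 : (∫⁻ x in Ω, f (fracPart (ε⁻¹ • x)) (φ x)) = ∫⁻ x, F x := by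
    rw [← lintegral_indicator hΩm]
    refine lintegral_congr fun x => ?_
    by_cases hx : x ∈ Ω
    · simp [hF, hψ, Set.indicator_of_mem hx]
    · simp [hF, hψ, Set.indicator_of_notMem hx, hf0]
  -- rewrite RHS integrand
  have hRHS : (∫⁻ x, ∫⁻ y in Ybox d, f y (unfoldOp ε Ω φ x y)) = ∫⁻ x, H x := rfl
  -- decompose both sides over the cubes
  have hL : ∫⁻ x, F x = ∑' ξ : Fin d → ℤ, ∫⁻ x in C ξ, F x := by
    rw [← setLIntegral_univ, ← hcover, lintegral_iUnion hCm hdisj]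
  have hR : ∫⁻ x, H x = ∑' ξ : Fin d → ℤ, ∫⁻ x in C ξ, H x := by
    rw [← setLIntegral_univ, ← hcover, lintegral_iUnion hCm hdisj]
  rw [h1, hRHS, hL, hR]
  refine tsum_congr fun ξ => ?_
  set c : Fin d → ℝ := ε • fun i => ((ξ i : ℝ)) with hc
  -- LHS piece
  have hLpiece : ∫⁻ x in C ξ, F x
      = ENNReal.ofReal ε ^ d * ∫⁻ y in Ybox d, f y (ψ (c + ε • y)) := by
    rw [unfold_cov_set hε c F (hCm ξ) hYm (hpre ξ)]
    congr 1
    refine setLIntegral_congr_fun hYm (fun y hy => ?_)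
    simp only [hF]
    rw [hfrac ξ y hy]
  -- RHS piece
  have hRpiece : ∫⁻ x in C ξ, H x
      = ENNReal.ofReal ε ^ d * ∫⁻ y in Ybox d, f y (ψ (c + ε • y)) := by
    have : ∫⁻ x in C ξ, H x
        = ∫⁻ _ in C ξ, (∫⁻ y in Ybox d, f y (ψ (c + ε • y))) := by
      refine setLIntegral_congr_fun (hCm ξ) (fun x hx => ?_)
      simp only [hH]
      rw [hint ξ x hx]
    rw [this, setLIntegral_const, hCvol, mul_comm]
  rw [hLpiece, hRpiece]
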